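/- arXiv:1805.00986 — 2 statements merged into one kernel-verified Lean document; each statement's English description precedes it below -/
import Mathlib

section
/- With a_i = a·q^{λ_i}·ħ^{i-n} as above, define E_1(λ) = a·(1 + (1-ħ)·∑_{i=1}^n (q^{λ_i}-1)·ħ^{i-1}). Then E_1(λ) = a·ħ^n + ħ^{n-1}·(1-ħ)·e_1(a_1,…,a_n). -/
/-- Proposition (matching spectra): with aᵢ = a·q^{λᵢ}·ℏ^{i-n},
E₁(λ) = a(1 + (1-ℏ)∑(q^{λᵢ}-1)ℏ^{i-1}) equals a·ℏⁿ + ℏ^{n-1}(1-ℏ)·e₁(a₁,…,aₙ). -/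
theorem stmt4 {K : Type*} [Field K] (q ℏ a : K) (hℏ0 : ℏ ≠ 0)
    (n : ℕ) (lam : ℕ → ℕ) :
    a * (1 + (1 - ℏ) * ∑ i ∈ Finset.range n, (q ^ lam i - 1) * ℏ ^ i)
      = a * ℏ ^ (n : ℤ) + ℏ ^ ((n : ℤ) - 1) * (1 - ℏ) *
          ∑ i ∈ Finset.range n, a * q ^ lam i * ℏ ^ ((i : ℤ) + 1 - n) := by
  have hsum : ∑ i ∈ Finset.range n, (q ^ lam i - 1) * ℏ ^ i
      = (∑ i ∈ Finset.range n, q ^ lam i * ℏ ^ i) - ∑ i ∈ Finset.range n, ℏ ^ i := by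
    rw [← Finset.sum_sub_distrib]
    exact Finset.sum_congr rfl fun i _ => by ring
  have hgeom : (∑ i ∈ Finset.range n, ℏ ^ i) * (ℏ - 1) = ℏ ^ n - 1 := geom_sum_mul ℏ n
  have hr : ∑ i ∈ Finset.range n, a * q ^ lam i * ℏ ^ ((i : ℤ) + 1 - n)
      = ℏ ^ ((1 : ℤ) - n) * (a * ∑ i ∈ Finset.range n, q ^ lam i * ℏ ^ i) := by
    rw [Finset.mul_sum, Finset.mul_sum]
    refine Finset.sum_congr rfl fun i _ => ?_
    rw [show ((i : ℤ) + 1 - n) = (1 - n) + i by ring, zpow_add₀ hℏ0, zpow_natCast]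
    ring
  have h1 : ℏ ^ ((n : ℤ) - 1) * ℏ ^ ((1 : ℤ) - n) = 1 := by
    rw [← zpow_add₀ hℏ0]; norm_num
  have h2 : ℏ ^ (n : ℤ) = ℏ ^ n := zpow_natCast ℏ n
  rw [hsum, hr, h2]
  linear_combination a * hgeom - (1 - ℏ) * a * (∑ i ∈ Finset.range n, q ^ lam i * ℏ ^ i) * h1
end

section
/- Assume |ħ| < 1. With a_i = a·q^{λ_i}·ħ^{i-n} for i = 1,…,n where λ is a fixed partition padded by zeros (λ_i = 0 for i > ℓ(λ)), the limit as n → ∞ of ħ^{n-1}·(1-ħ)·∑_{i=1}^n a_i exists and equals a·(1 + (1-ħ)·∑_{i=1}^{ℓ(λ)} (q^{λ_i}-1)·ħ^{i-1}). -/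
open Filter

/-- Stable large-n limit of the rescaled tRS eigenvalue: for |ℏ| < 1 and
aᵢ = a·q^{λᵢ}ℏ^{i-n} with λ a partition padded by zeros beyond its length L,
lim_{n→∞} ℏ^{n-1}(1-ℏ)·∑ᵢ aᵢ = a(1 + (1-ℏ)∑_{i≤L}(q^{λᵢ}-1)ℏ^{i-1}). -/
theorem stmt5 (q ℏ a : ℂ) (hℏ : ‖ℏ‖ < 1) (hℏ0 : ℏ ≠ 0)
    (L : ℕ) (lam : ℕ → ℕ)
    (hmono : ∀ i j : ℕ, i ≤ j → lam j ≤ lam i)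
    (hpad : ∀ i, L ≤ i → lam i = 0) :
    Tendsto
      (fun n : ℕ => ℏ ^ ((n : ℤ) - 1) * (1 - ℏ) *
        ∑ i ∈ Finset.range n, a * q ^ lam i * ℏ ^ ((i : ℤ) + 1 - n))
      atTop
      (nhds (a * (1 + (1 - ℏ) *
        ∑ i ∈ Finset.range L, (q ^ lam i - 1) * ℏ ^ i))) := by
  set S : ℂ := ∑ i ∈ Finset.range L, (q ^ lam i - 1) * ℏ ^ i with hS
  have hpow : Tendsto (fun n : ℕ => ℏ ^ n) atTop (nhds 0) :=
    tendsto_pow_atTop_nhds_zero_of_norm_lt_one (by simpa using hℏ)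
  have hlim : Tendsto (fun n : ℕ => a * (1 - ℏ ^ n) + a * (1 - ℏ) * S) atTop
      (nhds (a * (1 + (1 - ℏ) * S))) := by
    have := (((tendsto_const_nhds (x := (1:ℂ))).sub hpow).const_mul a).add
      (tendsto_const_nhds (x := a * (1 - ℏ) * S))
    simpa [mul_add, sub_zero, mul_assoc] using this
  refine hlim.congr' ?_
  filter_upwards [eventually_ge_atTop L] with n hn
  have step1 : ℏ ^ ((n : ℤ) - 1) * (1 - ℏ) *
        (∑ i ∈ Finset.range n, a * q ^ lam i * ℏ ^ ((i : ℤ) + 1 - n))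
      = (1 - ℏ) * ∑ i ∈ Finset.range n, a * q ^ lam i * ℏ ^ i := by
    rw [mul_comm (ℏ ^ ((n : ℤ) - 1)) (1 - ℏ), mul_assoc, Finset.mul_sum]
    congr 1
    refine Finset.sum_congr rfl fun i _ => ?_
    have hz : ℏ ^ ((n : ℤ) - 1) * ℏ ^ ((i : ℤ) + 1 - n) = ℏ ^ i := by
      rw [← zpow_natCast ℏ i, ← zpow_add₀ hℏ0]
      congr 1; ring
    calc ℏ ^ ((n : ℤ) - 1) * (a * q ^ lam i * ℏ ^ ((i : ℤ) + 1 - n))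
        = a * q ^ lam i * (ℏ ^ ((n : ℤ) - 1) * ℏ ^ ((i : ℤ) + 1 - n)) := by ring
      _ = a * q ^ lam i * ℏ ^ i := by rw [hz]
  have split : ∑ i ∈ Finset.range n, a * q ^ lam i * ℏ ^ i
      = ∑ i ∈ Finset.range n, a * ℏ ^ i
        + ∑ i ∈ Finset.range n, a * ((q ^ lam i - 1) * ℏ ^ i) := by
    rw [← Finset.sum_add_distrib]
    exact Finset.sum_congr rfl fun i _ => by ring
  have trunc : ∑ i ∈ Finset.range n, a * ((q ^ lam i - 1) * ℏ ^ i)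
      = ∑ i ∈ Finset.range L, a * ((q ^ lam i - 1) * ℏ ^ i) := by
    refine (Finset.sum_subset (Finset.range_subset_range.mpr hn) fun i _ hi => ?_).symm
    have : lam i = 0 := hpad i (le_of_not_gt (by simpa using hi))
    simp [this]
  have geom : (1 - ℏ) * ∑ i ∈ Finset.range n, ℏ ^ i = 1 - ℏ ^ n := by
    have := geom_sum_mul ℏ n
    linear_combination -this
  have h1 : ∑ i ∈ Finset.range n, a * ℏ ^ i = a * ∑ i ∈ Finset.range n, ℏ ^ i :=
    (Finset.mul_sum _ _ _).symm
  have h2 : ∑ i ∈ Finset.range L, a * ((q ^ lam i - 1) * ℏ ^ i) = a * S :=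
    (Finset.mul_sum _ _ _).symm
  show a * (1 - ℏ ^ n) + a * (1 - ℏ) * S
      = ℏ ^ ((n : ℤ) - 1) * (1 - ℏ) * ∑ i ∈ Finset.range n, a * q ^ lam i * ℏ ^ ((i : ℤ) + 1 - n)
  rw [step1, split, trunc, h1, h2]
  linear_combination (-(a : ℂ)) * geom
end
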